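/- Let A ≥ 1 be a real number and let b : ℤ → ℤ be a bijection satisfying the three-point condition with constant A: for all integers n₁ < n₂ < n₃, both |b(n₁) − b(n₂)| ≤ A·|b(n₁) − b(n₃)| and |b(n₂) − b(n₃)| ≤ A·|b(n₁) − b(n₃)|. Then with L = 8A², for every n ∈ ℤ and every integer k ≥ 1, |b(n) − b(n−k)| ≤ L·|b(n+k) − b(n)| and |b(n+k) − b(n)| ≤ L·|b(n) − b(n−k)|. -/

import Mathlib

private lemma abs_neg_sub_neg' (u v : ℝ) : |(-u) - (-v)| = |u - v| := by
  rw [show (-u) - (-v) = -(u - v) by ring, abs_neg]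

/-- Core inequality, assuming `b (n-k) < b n`. -/
private lemma core_ineq (A : ℝ) (hA : 1 ≤ A) (b : ℤ → ℤ) (hb : Function.Bijective b)
    (h3pt : ∀ n₁ n₂ n₃ : ℤ, n₁ < n₂ → n₂ < n₃ →
      |(b n₁ : ℝ) - (b n₂ : ℝ)| ≤ A * |(b n₁ : ℝ) - (b n₃ : ℝ)| ∧
      |(b n₂ : ℝ) - (b n₃ : ℝ)| ≤ A * |(b n₁ : ℝ) - (b n₃ : ℝ)|)
    (n k : ℤ) (hk : 1 ≤ k) (hPQ : b (n - k) < b n) :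
    |(b n : ℝ) - (b (n - k) : ℝ)| ≤ 8 * A ^ 2 * |(b (n + k) : ℝ) - (b n : ℝ)| := by
  classical
  by_contra hcon
  push_neg at hcon
  set P := b (n - k) with hP
  set Q := b n with hQ
  set R := b (n + k) with hR
  have hA0 : (0:ℝ) < A := lt_of_lt_of_le one_pos hA
  set xI : ℤ := Q - P with hxI
  set yI : ℤ := |R - Q| with hyI
  have hxIpos : 0 < xI := by omega
  have hyI1 : 1 ≤ yI := by
    have h1 : R ≠ Q := by
      intro h
      have := hb.1 h
      omega
    exact Int.one_le_abs (sub_ne_zero.mpr h1)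
  have hy1R : (1:ℝ) ≤ (yI:ℝ) := by exact_mod_cast hyI1
  have habsx : |(Q:ℝ) - (P:ℝ)| = (xI:ℝ) := by
    rw [abs_of_pos (by exact_mod_cast sub_pos.mpr hPQ)]
    push_cast [hxI]; ring
  have habsy : |(R:ℝ) - (Q:ℝ)| = (yI:ℝ) := by
    rw [hyI]; push_cast; ring_nf
  rw [habsx, habsy] at hcon
  -- hcon : 8 * A ^ 2 * yI < xI
  -- inverse of b
  set g : ℤ → ℤ := Function.surjInv hb.2 with hgdef
  have hbg : ∀ m, b (g m) = m := fun m => Function.surjInv_eq hb.2 m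
  have ginj : Function.Injective g := fun a₁ a₂ h => by
    rw [← hbg a₁, h, hbg]
  -- F1 : indices right of n have values far from P
  have F1 : ∀ j, n < j → (xI:ℝ) ≤ A * |(b j : ℝ) - (P:ℝ)| := by
    intro j hj
    have h := (h3pt (n-k) n j (by omega) hj).1
    rw [abs_sub_comm ((P:ℤ):ℝ) ((Q:ℤ):ℝ), habsx, abs_sub_comm ((P:ℤ):ℝ)] at h
    exact h
  -- F2 : indices left of n-k have values far from Q
  have F2 : ∀ j, j < n - k → (xI:ℝ) ≤ A * |(b j : ℝ) - (Q:ℝ)| := by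
    intro j hj
    have h := (h3pt j (n-k) n hj (by omega)).2
    rw [abs_sub_comm ((P:ℤ):ℝ) ((Q:ℤ):ℝ), habsx] at h
    exact h
  -- F3 : indices in (n, n+k] have values close to Q
  have F3 : ∀ j, n < j → j ≤ n + k → |(b j : ℝ) - (Q:ℝ)| ≤ A * (yI:ℝ) := by
    intro j h1 h2
    rcases eq_or_lt_of_le h2 with he | hlt
    · rw [he]
      rw [show ((b (n+k) : ℤ):ℝ) = (R:ℝ) from rfl, habsy]
      exact le_mul_of_one_le_left (by linarith) hA
    · have h := (h3pt n j (n+k) h1 hlt).1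
      rw [abs_sub_comm ((Q:ℤ):ℝ) ((b j : ℤ):ℝ), abs_sub_comm ((Q:ℤ):ℝ) ((R:ℤ):ℝ), habsy] at h
      exact h
  -- counting: k ≤ 2⌊A yI⌋
  set D : ℤ := ⌊A * (yI:ℝ)⌋ with hD
  have hD1 : 1 ≤ D := by
    rw [hD, Int.le_floor]
    push_cast
    nlinarith
  have hkD : k ≤ 2 * D := by
    have hmaps : ∀ j ∈ Finset.Icc n (n+k), b j ∈ Finset.Icc (Q - D) (Q + D) := by
      intro j hj
      simp only [Finset.mem_Icc] at hj ⊢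
      have habs : |(b j : ℝ) - (Q:ℝ)| ≤ A * (yI:ℝ) := by
        rcases eq_or_lt_of_le hj.1 with he | hlt
        · rw [← he]
          simp only [← hQ, sub_self, abs_zero]
          positivity
        · exact F3 j hlt hj.2
      have hint : |b j - Q| ≤ D := by
        rw [hD, Int.le_floor]
        push_cast
        exact habs
      have := abs_le.mp hint
      omega
    have hcard := Finset.card_le_card_of_injOn b hmaps (hb.1.injOn)
    rw [Int.card_Icc, Int.card_Icc] at hcard
    omega
  -- bound for "left" values inside (P, Q)
  have hVbound : ∀ m : ℤ, P < m → m < Q → g m < n - k → m ≤ P + ⌊A⌋ := by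
    by_cases hne : ∃ m : ℤ, P < m ∧ m < Q ∧ g m < n - k
    · obtain ⟨v, hv, hvmax⟩ := Int.exists_greatest_of_bdd
        (P := fun m => P < m ∧ m < Q ∧ g m < n - k)
        ⟨Q, fun z hz => le_of_lt hz.2.1⟩ hne
      have hgv : g v < n - k := hv.2.2
      have hvQreal : (xI:ℝ) ≤ A * ((Q:ℝ) - (v:ℝ)) := by
        have h := F2 (g v) hgv
        rw [hbg v] at h
        rwa [abs_sub_comm, abs_of_pos (by exact_mod_cast sub_pos.mpr hv.2.1)] at h
      have hQvbig : A * (yI:ℝ) + A + 1 < (Q:ℝ) - (v:ℝ) := by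
        have h2 : A * (A * (yI:ℝ) + A + 1) < A * ((Q:ℝ) - (v:ℝ)) := by nlinarith
        exact lt_of_mul_lt_mul_left h2 hA0.le
      have hQv4 : v + 4 ≤ Q := by
        have h3 : (3:ℝ) < ((Q - v : ℤ):ℝ) := by push_cast; nlinarith
        have : (3:ℤ) < Q - v := by exact_mod_cast h3
        omega
      have hRge : -(yI:ℝ) ≤ (R:ℝ) - (Q:ℝ) := by
        rw [← habsy]; exact neg_abs_le _
      have hAyy : (yI:ℝ) ≤ A * (yI:ℝ) := le_mul_of_one_le_left (by linarith) hA
      have hvA : (v:ℝ) - (P:ℝ) ≤ A := by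
        by_contra hnot
        push_neg at hnot
        have hbj : b (g (v+1)) = v + 1 := hbg _
        have habs1 : |(v:ℝ) - ((v:ℝ)+1)| = 1 := by
          rw [show (v:ℝ) - ((v:ℝ)+1) = -1 by ring, abs_neg, abs_one]
        rcases (by omega : g (v+1) < n-k ∨ g (v+1) = n-k ∨ (n-k < g (v+1) ∧ g (v+1) < n)
            ∨ g (v+1) = n ∨ (n < g (v+1) ∧ g (v+1) ≤ n+k) ∨ n+k < g (v+1)) with
          h | h | h | h | h | h
        · have := hvmax (v+1) ⟨by omega, by omega, h⟩
          omega
        · rw [h] at hbj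
          omega
        · have hh := (h3pt (g v) (n-k) (g (v+1)) hgv h.1).1
          rw [hbg v, hbj] at hh
          push_cast at hh
          rw [habs1] at hh
          have : (v:ℝ) - (P:ℝ) ≤ A := by
            calc (v:ℝ) - P ≤ |(v:ℝ) - (P:ℝ)| := le_abs_self _
            _ ≤ A * 1 := hh
            _ = A := mul_one A
          linarith
        · rw [h] at hbj
          omega
        · have hh := F3 _ h.1 h.2
          rw [hbj] at hh
          push_cast at hh
          have hle : (Q:ℝ) - ((v:ℝ)+1) ≤ |(v:ℝ) + 1 - (Q:ℝ)| := by
            rw [abs_sub_comm]; exact le_abs_self _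
          linarith
        · have hh := (h3pt (g v) (n+k) (g (v+1)) (by omega) h).1
          rw [hbg v, hbj] at hh
          push_cast at hh
          rw [habs1] at hh
          have hle : (R:ℝ) - (v:ℝ) ≤ |(v:ℝ) - (R:ℝ)| := by
            rw [abs_sub_comm]; exact le_abs_self _
          linarith
      have hvfloor : v ≤ P + ⌊A⌋ := by
        have : v - P ≤ ⌊A⌋ := by
          rw [Int.le_floor]; push_cast; linarith
        omega
      intro m hm1 hm2 hm3
      exact le_trans (hvmax m ⟨hm1, hm2, hm3⟩) hvfloor
    · intro m hm1 hm2 hm3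
      exact absurd ⟨m, hm1, hm2, hm3⟩ hne
  -- final counting
  set C : ℤ := ⌈(xI:ℝ)/A⌉ with hC
  have hC1 : (xI:ℝ)/A ≤ (C:ℝ) := Int.le_ceil _
  have hCx : C ≤ xI := by
    rw [hC, Int.ceil_le]
    exact div_le_self (by positivity) hA
  have hfA1 : 1 ≤ ⌊A⌋ := by rw [Int.le_floor]; exact_mod_cast hA
  have hmaps2 : ∀ m ∈ Finset.Icc (P + ⌊A⌋ + 1) (P + C - 1), g m ∈ Finset.Icc (n-k+1) (n-1) := by
    intro m hm
    simp only [Finset.mem_Icc] at hm ⊢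
    have hmP : P < m := by omega
    have hmQ : m < Q := by omega
    have hmreal : (m:ℝ) - (P:ℝ) < (xI:ℝ)/A := by
      have h1 : (m:ℝ) ≤ (P:ℝ) + (C:ℝ) - 1 := by exact_mod_cast hm.2
      have h2 : (C:ℝ) < (xI:ℝ)/A + 1 := Int.ceil_lt_add_one _
      linarith
    have hbm : b (g m) = m := hbg m
    rcases lt_trichotomy (g m) n with h | h | h
    · rcases lt_trichotomy (g m) (n-k) with h' | h' | h'
      · have := hVbound m hmP hmQ h'
        omega
      · rw [h'] at hbm
        omega
      · omega
    · rw [h] at hbm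
      omega
    · exfalso
      have hF := F1 (g m) h
      rw [hbm] at hF
      rw [abs_of_pos (by exact_mod_cast sub_pos.mpr hmP)] at hF
      have h5 : A * ((m:ℝ) - (P:ℝ)) < A * ((xI:ℝ)/A) := by
        exact mul_lt_mul_of_pos_left hmreal hA0
      rw [mul_div_cancel₀ _ (ne_of_gt hA0)] at h5
      linarith
  have hcard2 := Finset.card_le_card_of_injOn g hmaps2 (ginj.injOn)
  rw [Int.card_Icc, Int.card_Icc] at hcard2
  have hCk : C ≤ k + ⌊A⌋ := by omega
  -- numeric wrap-up
  have hfA : (⌊A⌋:ℝ) ≤ A := Int.floor_le A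
  have hkreal : (k:ℝ) ≤ 2 * (A * (yI:ℝ)) := by
    have h1 : (k:ℝ) ≤ 2 * (D:ℝ) := by exact_mod_cast hkD
    have h2 : (D:ℝ) ≤ A * (yI:ℝ) := Int.floor_le _
    linarith
  have hCreal : (C:ℝ) ≤ (k:ℝ) + A := by
    have h1 : (C:ℝ) ≤ (k:ℝ) + (⌊A⌋:ℝ) := by exact_mod_cast hCk
    linarith
  have hxle : (xI:ℝ) ≤ ((k:ℝ) + A) * A := by
    have h1 : (xI:ℝ) ≤ (C:ℝ) * A := by
      rw [div_le_iff₀ hA0] at hC1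
      exact hC1
    nlinarith
  nlinarith

/-- Core inequality without the sign assumption. -/
private lemma core_ineq2 (A : ℝ) (hA : 1 ≤ A) (b : ℤ → ℤ) (hb : Function.Bijective b)
    (h3pt : ∀ n₁ n₂ n₃ : ℤ, n₁ < n₂ → n₂ < n₃ →
      |(b n₁ : ℝ) - (b n₂ : ℝ)| ≤ A * |(b n₁ : ℝ) - (b n₃ : ℝ)| ∧
      |(b n₂ : ℝ) - (b n₃ : ℝ)| ≤ A * |(b n₁ : ℝ) - (b n₃ : ℝ)|)
    (n k : ℤ) (hk : 1 ≤ k) :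
    |(b n : ℝ) - (b (n - k) : ℝ)| ≤ 8 * A ^ 2 * |(b (n + k) : ℝ) - (b n : ℝ)| := by
  rcases lt_trichotomy (b (n - k)) (b n) with h | h | h
  · exact core_ineq A hA b hb h3pt n k hk h
  · exact absurd (hb.1 h) (by omega)
  · -- apply to -b
    set c : ℤ → ℤ := fun j => -(b j) with hc
    have hcb : Function.Bijective c := by
      constructor
      · intro a₁ a₂ hh
        exact hb.1 (by simpa [hc] using hh)
      · intro m
        obtain ⟨j, hj⟩ := hb.2 (-m)
        exact ⟨j, by simp [hc, hj]⟩
    have hc3 : ∀ n₁ n₂ n₃ : ℤ, n₁ < n₂ → n₂ < n₃ →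
        |(c n₁ : ℝ) - (c n₂ : ℝ)| ≤ A * |(c n₁ : ℝ) - (c n₃ : ℝ)| ∧
        |(c n₂ : ℝ) - (c n₃ : ℝ)| ≤ A * |(c n₁ : ℝ) - (c n₃ : ℝ)| := by
      intro n₁ n₂ n₃ h12 h23
      have := h3pt n₁ n₂ n₃ h12 h23
      simp only [hc]
      push_cast
      rw [abs_neg_sub_neg', abs_neg_sub_neg', abs_neg_sub_neg']
      exact this
    have hPQ : c (n - k) < c n := by simp [hc]; omega
    have := core_ineq A hA c hcb hc3 n k hk hPQ
    simp only [hc] at this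
    push_cast at this
    rwa [abs_neg_sub_neg', abs_neg_sub_neg'] at this

/-- Proposition 3.3 (combinatorial form): a bijection `b : ℤ → ℤ` satisfying the
three-point condition with constant `A` has symmetric gap ratios bounded by `L = 8A²`. -/
theorem stmt_7 (A : ℝ) (hA : 1 ≤ A) (b : ℤ → ℤ) (hb : Function.Bijective b)
    (h3pt : ∀ n₁ n₂ n₃ : ℤ, n₁ < n₂ → n₂ < n₃ →
      |(b n₁ : ℝ) - (b n₂ : ℝ)| ≤ A * |(b n₁ : ℝ) - (b n₃ : ℝ)| ∧
      |(b n₂ : ℝ) - (b n₃ : ℝ)| ≤ A * |(b n₁ : ℝ) - (b n₃ : ℝ)|) :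
    ∀ n k : ℤ, 1 ≤ k →
      |(b n : ℝ) - (b (n - k) : ℝ)| ≤ 8 * A ^ 2 * |(b (n + k) : ℝ) - (b n : ℝ)| ∧
      |(b (n + k) : ℝ) - (b n : ℝ)| ≤ 8 * A ^ 2 * |(b n : ℝ) - (b (n - k) : ℝ)| := by
  intro n k hk
  constructor
  · exact core_ineq2 A hA b hb h3pt n k hk
  · -- reflect indices about n
    set c : ℤ → ℤ := fun j => b (2*n - j) with hc
    have hcb : Function.Bijective c := by
      constructor
      · intro a₁ a₂ hh
        have := hb.1 hh
        omega
      · intro m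
        obtain ⟨j, hj⟩ := hb.2 m
        exact ⟨2*n - j, by simp only [hc]; rw [show 2*n - (2*n - j) = j by ring, hj]⟩
    have hc3 : ∀ n₁ n₂ n₃ : ℤ, n₁ < n₂ → n₂ < n₃ →
        |(c n₁ : ℝ) - (c n₂ : ℝ)| ≤ A * |(c n₁ : ℝ) - (c n₃ : ℝ)| ∧
        |(c n₂ : ℝ) - (c n₃ : ℝ)| ≤ A * |(c n₁ : ℝ) - (c n₃ : ℝ)| := by
      intro n₁ n₂ n₃ h12 h23
      have h := h3pt (2*n - n₃) (2*n - n₂) (2*n - n₁) (by omega) (by omega)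
      simp only [hc]
      constructor
      · rw [abs_sub_comm ((b (2*n - n₁) : ℤ):ℝ), abs_sub_comm ((b (2*n - n₁) : ℤ):ℝ)]
        exact h.2
      · rw [abs_sub_comm ((b (2*n - n₂) : ℤ):ℝ), abs_sub_comm ((b (2*n - n₁) : ℤ):ℝ)]
        exact h.1
    have h := core_ineq2 A hA c hcb hc3 n k hk
    simp only [hc] at h
    rw [show 2*n - n = n by ring, show 2*n - (n - k) = n + k by ring,
      show 2*n - (n + k) = n - k by ring] at h
    rw [abs_sub_comm ((b n : ℤ):ℝ), abs_sub_comm ((b (n - k) : ℤ):ℝ)] at h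
    exact h
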